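/- Let H be a group with presentation ⟨r₁,...,r_{n−1} | (rᵢrⱼ)^{mᵢⱼ}⟩ where mᵢᵢ = 1, mᵢⱼ = 3 if |i−j| = 1, and mᵢⱼ = 2 if |i−j| > 1. Then H is isomorphic to the symmetric group Sym(n). -/

import Mathlib

/-- The Coxeter exponents for the standard presentation of `Sym(n)`:
`mᵢᵢ = 1`, `mᵢⱼ = 3` if `|i−j| = 1`, and `mᵢⱼ = 2` if `|i−j| > 1`. -/
def coxM (n : ℕ) (i j : Fin (n - 1)) : ℕ :=
  if i = j then 1 else if Nat.dist i.val j.val = 1 then 3 else 2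

/-- The relators `(rᵢrⱼ)^{mᵢⱼ}` in the free group on `r₁, …, r_{n-1}`. -/
def coxRels (n : ℕ) : Set (FreeGroup (Fin (n - 1))) :=
  {x | ∃ i j : Fin (n - 1), x = (FreeGroup.of i * FreeGroup.of j) ^ coxM n i j}

namespace CoxA

variable {n : ℕ}

abbrev G (n : ℕ) := PresentedGroup (coxRels n)

lemma rel_one (i j : Fin (n - 1)) :
    (PresentedGroup.of (rels := coxRels n) i * PresentedGroup.of j) ^ coxM n i j = 1 := by
  have h : ((FreeGroup.of i * FreeGroup.of j) ^ coxM n i j) ∈ coxRels n := ⟨i, j, rfl⟩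
  have := (QuotientGroup.eq_one_iff (N := Subgroup.normalClosure (coxRels n))
      ((FreeGroup.of i * FreeGroup.of j) ^ coxM n i j)).mpr (Subgroup.subset_normalClosure h)
  exact this

/-- Generators extended to ℕ by 1. -/
noncomputable def s (n : ℕ) (a : ℕ) : G n :=
  if h : a < n - 1 then PresentedGroup.of ⟨a, h⟩ else 1

lemma of_sq (i : Fin (n-1)) : PresentedGroup.of (rels := coxRels n) i * PresentedGroup.of i = 1 := by
  have := rel_one i i
  simpa [coxM] using this

lemma s_sq (a : ℕ) : s n a * s n a = 1 := by
  unfold s; split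
  · exact of_sq _
  · simp

lemma s_inv (a : ℕ) : (s n a)⁻¹ = s n a := by
  rw [inv_eq_iff_mul_eq_one]; exact s_sq a

lemma s_comm {a b : ℕ} (h : a + 2 ≤ b) : s n a * s n b = s n b * s n a := by
  unfold s
  split <;> split <;> try simp
  rename_i ha hb
  have hne : (⟨a, ha⟩ : Fin (n-1)) ≠ ⟨b, hb⟩ := by
    simp only [ne_eq, Fin.mk.injEq]; omega
  have hd : Nat.dist a b ≠ 1 := by simp [Nat.dist]; omega
  have h3 := rel_one (n := n) ⟨a, ha⟩ ⟨b, hb⟩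
  rw [coxM, if_neg hne, if_neg hd] at h3
  set x := PresentedGroup.of (rels := coxRels n) ⟨a,ha⟩ with hxdef
  set y := PresentedGroup.of (rels := coxRels n) ⟨b,hb⟩ with hydef
  have hxi : x⁻¹ = x := inv_eq_iff_mul_eq_one.mpr (of_sq _)
  have hyi : y⁻¹ = y := inv_eq_iff_mul_eq_one.mpr (of_sq _)
  have h2 : (x * y) * (x * y) = 1 := by
    rw [show (x*y)*(x*y) = (x*y)^2 by rw [pow_two]]; exact h3
  have := inv_eq_of_mul_eq_one_right h2
  rw [mul_inv_rev, hxi, hyi] at this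
  exact this.symm

lemma s_braid {a : ℕ} (h : a + 1 < n - 1) :
    s n a * s n (a+1) * s n a = s n (a+1) * s n a * s n (a+1) := by
  have ha : a < n - 1 := by omega
  have hne : (⟨a, ha⟩ : Fin (n-1)) ≠ ⟨a+1, h⟩ := by simp [Fin.mk.injEq]
  have hd : Nat.dist a (a+1) = 1 := by simp [Nat.dist]
  have h3 := rel_one (n := n) ⟨a, ha⟩ ⟨a+1, h⟩
  rw [coxM, if_neg hne, if_pos hd] at h3
  have hsa : s n a = PresentedGroup.of (rels := coxRels n) ⟨a, ha⟩ := by simp [s, ha]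
  have hsb : s n (a+1) = PresentedGroup.of (rels := coxRels n) ⟨a+1, h⟩ := by simp [s, h]
  rw [hsa, hsb]
  set x := PresentedGroup.of (rels := coxRels n) ⟨a,ha⟩ with hxdef
  set y := PresentedGroup.of (rels := coxRels n) ⟨a+1,h⟩ with hydef
  have hxi : x⁻¹ = x := inv_eq_iff_mul_eq_one.mpr (of_sq _)
  have hyi : y⁻¹ = y := inv_eq_iff_mul_eq_one.mpr (of_sq _)
  have h2 : (x * y * x) * (y * x * y) = 1 := by
    rw [show (x*y*x)*(y*x*y) = (x*y)^3 by rw [pow_succ, pow_two]; group]; exact h3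
  have := inv_eq_of_mul_eq_one_right h2
  rw [mul_inv_rev, mul_inv_rev, hxi, hyi] at this
  rw [← this]; group

end CoxA

namespace CoxA
variable {n : ℕ}

/-- `c n j = s (m-1) * s (m-2) * ... * s (m-j)` where `m = n - 1`. -/
noncomputable def c (n : ℕ) : ℕ → G n
  | 0 => 1
  | j+1 => c n j * s n (n - 2 - j)

lemma c_low : ∀ j, ∀ a, a + 2 ≤ n - 1 - j → c n j * s n a = s n a * c n j := by
  intro j
  induction j with
  | zero => intro a _; simp [c]
  | succ j ih =>
    intro a ha
    have h1 : a + 2 ≤ n - 2 - j := by omega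
    have h2 : a + 2 ≤ n - 1 - j := by omega
    rw [c, mul_assoc, ← s_comm h1, ← mul_assoc, ih a h2, mul_assoc]

lemma c_comm : ∀ j, j ≤ n - 1 → ∀ a, n - 1 - j < a → a < n - 1 →
    c n j * s n a = s n (a - 1) * c n j := by
  intro j
  induction j with
  | zero => intro _ a h1 h2; omega
  | succ j ih =>
    intro hj a h1 h2
    rcases Nat.lt_or_ge (n - 1 - j) a with hgt | hle
    · -- a > n - 1 - j : commute s (n-2-j) past s a, use ih
      have hc : (n - 2 - j) + 2 ≤ a := by omega
      rw [c, mul_assoc, s_comm hc, ← mul_assoc, ih (by omega) a hgt h2, mul_assoc]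
    · -- a = n - 1 - j, so j ≥ 1
      have hae : a = n - 1 - j := by omega
      have hj1 : 1 ≤ j := by omega
      obtain ⟨j', rfl⟩ : ∃ j', j = j' + 1 := ⟨j - 1, by omega⟩
      -- c (j'+2) = c j' * s (n-2-j') * s (n-2-j'-1), with p := n-2-j' = a, q := a - 1
      have hp : n - 2 - j' = a := by omega
      have hq : n - 2 - (j'+1) = a - 1 := by omega
      have hbraid : s n (a-1) * s n a * s n (a-1) = s n a * s n (a-1) * s n a := by
        have := s_braid (n := n) (a := a - 1) (by omega)
        have ha1 : a - 1 + 1 = a := by omega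
        rw [ha1] at this; exact this
      have hlow : c n j' * s n (a-1) = s n (a-1) * c n j' :=
        c_low j' (a-1) (by omega)
      calc c n (j'+1+1) * s n a
          = c n j' * (s n a * s n (a-1) * s n a) := by
            rw [c, c, hp, hq]; group
        _ = c n j' * (s n (a-1) * s n a * s n (a-1)) := by rw [← hbraid]
        _ = (c n j' * s n (a-1)) * (s n a * s n (a-1)) := by group
        _ = s n (a-1) * (c n j' * s n a * s n (a-1)) := by rw [hlow]; group
        _ = s n (a-1) * c n (j'+1+1) := by rw [c, c, hp, hq]

/-- The subgroup generated by the "low" generators `s a`, `a + 1 < n - 1`. -/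
noncomputable def K (n : ℕ) : Subgroup (G n) :=
  Subgroup.closure {x | ∃ a, a + 1 < n - 1 ∧ x = s n a}

lemma mem_K {a : ℕ} (h : a + 1 < n - 1) : s n a ∈ K n :=
  Subgroup.subset_closure ⟨a, h, rfl⟩

def U (n : ℕ) : Set (G n) := {x | ∃ k ∈ K n, ∃ j ≤ n - 1, x = k * c n j}

lemma U_mul_s {x : G n} (hx : x ∈ U n) (a : ℕ) : x * s n a ∈ U n := by
  obtain ⟨k, hk, j, hj, rfl⟩ := hx
  rcases Nat.lt_or_ge a (n-1) with ha | ha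
  swap
  · -- s n a = 1
    have : s n a = 1 := by simp [s]; omega
    rw [this, mul_one]; exact ⟨k, hk, j, hj, rfl⟩
  rcases Nat.lt_or_ge (a+1) (n-1-j) with h1 | h1
  · -- low : commutes
    refine ⟨k * s n a, mul_mem hk (mem_K (by omega)), j, hj, ?_⟩
    rw [mul_assoc, c_low j a (by omega), mul_assoc]
  rcases Nat.eq_or_lt_of_le h1 with h2 | h2
  · -- a + 1 = n - 1 - j : extend the word
    refine ⟨k, hk, j+1, by omega, ?_⟩
    have : n - 2 - j = a := by omega
    rw [c, this, mul_assoc]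
  rcases Nat.lt_or_ge (n-1-j) a with h3 | h3
  · -- a > n - 1 - j : c_comm
    refine ⟨k * s n (a-1), mul_mem hk (mem_K (by omega)), j, hj, ?_⟩
    rw [mul_assoc, c_comm j hj a h3 ha, mul_assoc]
  · -- a = n - 1 - j, j ≥ 1 : shrink the word
    have hae : a = n - 1 - j := by omega
    obtain ⟨j', rfl⟩ : ∃ j', j = j' + 1 := ⟨j - 1, by omega⟩
    refine ⟨k, hk, j', by omega, ?_⟩
    have hp : n - 2 - j' = a := by omega
    rw [c, hp, mul_assoc, mul_assoc, s_sq, mul_one]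

lemma mem_U (x : G n) : x ∈ U n := by
  have h1 : (1 : G n) ∈ U n := ⟨1, one_mem _, 0, by omega, by simp [c]⟩
  let M : Submonoid (G n) :=
    { carrier := {g | ∀ u ∈ U n, u * g ∈ U n}
      one_mem' := fun u hu => by simpa using hu
      mul_mem' := fun {g₁ g₂} hg₁ hg₂ u hu => by
        rw [← mul_assoc]; exact hg₂ _ (hg₁ u hu) }
  have hof : ∀ i : Fin (n-1), PresentedGroup.of (rels := coxRels n) i ∈ M := by
    intro i u hu
    have : PresentedGroup.of (rels := coxRels n) i = s n i.val := by
      simp [s, i.isLt]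
    rw [this]; exact U_mul_s hu _
  have htop : (Subgroup.closure (Set.range (PresentedGroup.of : Fin (n-1) → G n))).toSubmonoid
      = Submonoid.closure (Set.range (PresentedGroup.of : Fin (n-1) → G n) ∪
        (Set.range (PresentedGroup.of : Fin (n-1) → G n))⁻¹) :=
    Subgroup.closure_toSubmonoid _
  have hM : x ∈ M := by
    have hx : x ∈ Submonoid.closure (Set.range (PresentedGroup.of : Fin (n-1) → G n) ∪
        (Set.range (PresentedGroup.of : Fin (n-1) → G n))⁻¹) := by
      rw [← htop, PresentedGroup.closure_range_of]; trivial
    refine Submonoid.closure_le.mpr ?_ hx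
    rintro y (⟨i, rfl⟩ | hy)
    · exact hof i
    · obtain ⟨i, hi⟩ := hy
      have h2 : (PresentedGroup.of (rels := coxRels n) i)⁻¹ = PresentedGroup.of i :=
        inv_eq_iff_mul_eq_one.mpr (of_sq i)
      have hy' : y = PresentedGroup.of i := by rw [← inv_inv y, ← hi, h2]
      rw [hy']; exact hof i
  simpa using hM 1 h1

end CoxA

namespace CoxA
variable {n : ℕ}

lemma s_eq_of (a : ℕ) (h : a < n - 1) :
    s n a = PresentedGroup.of (rels := coxRels n) ⟨a, h⟩ := by simp [s, h]

lemma srel_one {a b : ℕ} (ha : a < n - 1) (hb : b < n - 1) :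
    (s n a * s n b) ^ (if a = b then 1 else if Nat.dist a b = 1 then 3 else 2) = 1 := by
  rw [s_eq_of a ha, s_eq_of b hb]
  have := rel_one (n := n) ⟨a, ha⟩ ⟨b, hb⟩
  rw [coxM] at this
  simpa [Fin.mk.injEq] using this

/-- The embedding `G n →* G (n+1)` sending generators to generators. -/
noncomputable def ι (n : ℕ) : G n →* G (n+1) :=
  PresentedGroup.toGroup (f := fun i : Fin (n - 1) => s (n+1) i.val) (by
    rintro r ⟨i, j, rfl⟩
    rw [map_pow, map_mul, FreeGroup.lift_apply_of, FreeGroup.lift_apply_of]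
    have hi : (i.val : ℕ) < (n+1) - 1 := by have := i.isLt; omega
    have hj : (j.val : ℕ) < (n+1) - 1 := by have := j.isLt; omega
    have hM : coxM n i j =
        (if (i:ℕ) = (j:ℕ) then 1 else if Nat.dist i j = 1 then 3 else 2) := by
      simp [coxM, Fin.ext_iff]
    rw [hM]
    exact srel_one hi hj)

lemma K_eq_range : K (n+1) = (ι n).range := by
  have h1 : (ι n).range = Subgroup.map (ι n) ⊤ := by
    rw [MonoidHom.range_eq_map]
  rw [h1, ← PresentedGroup.closure_range_of (coxRels n),
    MonoidHom.map_closure]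
  unfold K
  congr 1
  ext x
  constructor
  · rintro ⟨a, ha, rfl⟩
    refine ⟨PresentedGroup.of ⟨a, by omega⟩, ⟨⟨a, by omega⟩, rfl⟩, ?_⟩
    show (ι n) (PresentedGroup.of _) = s (n+1) a
    rw [ι, PresentedGroup.toGroup.of]
  · rintro ⟨y, ⟨i, rfl⟩, rfl⟩
    refine ⟨i.val, by have := i.isLt; omega, ?_⟩
    show (ι n) (PresentedGroup.of i) = s (n+1) i.val
    exact PresentedGroup.toGroup.of _

lemma U_surj : Function.Surjective
    (fun p : K n × Fin (n - 1 + 1) => (p.1 : G n) * c n p.2.val) := by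
  intro x
  obtain ⟨k, hk, j, hj, rfl⟩ := mem_U x
  exact ⟨⟨⟨k, hk⟩, ⟨j, by omega⟩⟩, rfl⟩

lemma finite_and_card : Finite (G n) ∧ Nat.card (G n) ≤ n.factorial := by
  induction n with
  | zero =>
    have hK : K 0 = ⊥ := by
      unfold K
      rw [show {x : G 0 | ∃ a, a + 1 < 0 - 1 ∧ x = s 0 a} = ∅ from by ext x; simp,
        Subgroup.closure_empty]
    have hsub : ∀ x : G 0, x = 1 := by
      intro x
      obtain ⟨k, hk, j, hj, rfl⟩ := mem_U x
      interval_cases j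
      rw [hK, Subgroup.mem_bot] at hk
      simp [hk, c]
    have hss : Subsingleton (G 0) := ⟨fun a b => by rw [hsub a, hsub b]⟩
    refine ⟨Finite.of_subsingleton, ?_⟩
    have : Nat.card (G 0) = 1 := Nat.card_eq_one_iff_unique.mpr ⟨hss, ⟨1⟩⟩
    simp [this, Nat.factorial]
  | succ n ih =>
    obtain ⟨hfin, hcard⟩ := ih
    have hKfin : Finite (K (n+1)) := by
      rw [K_eq_range]
      exact Finite.of_surjective _ (ι n).rangeRestrict_surjective
    have hKcard : Nat.card (K (n+1)) ≤ Nat.card (G n) := by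
      rw [K_eq_range]
      exact Nat.card_le_card_of_surjective _ (ι n).rangeRestrict_surjective
    have hfin1 : Finite (G (n+1)) := Finite.of_surjective _ (U_surj (n := n+1))
    refine ⟨hfin1, ?_⟩
    have h2 : Nat.card (G (n+1)) ≤ Nat.card (K (n+1) × Fin ((n+1) - 1 + 1)) :=
      Nat.card_le_card_of_surjective _ (U_surj (n := n+1))
    rw [Nat.card_prod, Nat.card_eq_fintype_card (α := Fin _), Fintype.card_fin,
      show (n + 1) - 1 + 1 = n + 1 from by omega] at h2
    calc Nat.card (G (n+1)) ≤ Nat.card (K (n+1)) * (n+1) := h2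
      _ ≤ Nat.card (G n) * (n+1) := Nat.mul_le_mul_right _ hKcard
      _ ≤ n.factorial * (n+1) := Nat.mul_le_mul_right _ hcard
      _ = (n+1).factorial := by rw [Nat.factorial_succ, Nat.mul_comm]

end CoxA

section SwapLemmas
variable {α : Type*} [DecidableEq α]

lemma swap_cube {a b c : α} (hab : a ≠ b) (hbc : b ≠ c) (hac : a ≠ c) :
    (Equiv.swap a b * Equiv.swap b c) ^ 3 = 1 := by
  ext x
  simp only [pow_succ, pow_zero, one_mul, Equiv.Perm.mul_apply, Equiv.Perm.one_apply]
  by_cases hxa : x = a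
  · subst hxa; simp [Equiv.swap_apply_of_ne_of_ne, hab, hbc, hac, hab.symm, hbc.symm, hac.symm]
  by_cases hxb : x = b
  · subst hxb; simp [Equiv.swap_apply_of_ne_of_ne, hab, hbc, hac, hab.symm, hbc.symm, hac.symm]
  by_cases hxc : x = c
  · subst hxc; simp [Equiv.swap_apply_of_ne_of_ne, hab, hbc, hac, hab.symm, hbc.symm, hac.symm]
  · simp [Equiv.swap_apply_of_ne_of_ne, hxa, hxb, hxc]

lemma swap_sq_disj {a b c d : α} (hac : a ≠ c) (had : a ≠ d) (hbc : b ≠ c)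
    (hbd : b ≠ d) : (Equiv.swap a b * Equiv.swap c d) ^ 2 = 1 := by
  have hcomm : Equiv.swap a b * Equiv.swap c d = Equiv.swap c d * Equiv.swap a b := by
    ext x
    simp only [Equiv.Perm.mul_apply]
    by_cases hxa : x = a
    · subst hxa; simp [Equiv.swap_apply_of_ne_of_ne, hac, had, hbc, hbd]
    by_cases hxb : x = b
    · subst hxb; simp [Equiv.swap_apply_of_ne_of_ne, hac, had, hbc, hbd]
    by_cases hxc : x = c
    · subst hxc; simp [Equiv.swap_apply_of_ne_of_ne, hac.symm, hbc.symm, had.symm, hbd.symm,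
        Equiv.swap_apply_of_ne_of_ne hxa hxb]
    by_cases hxd : x = d
    · subst hxd; simp [Equiv.swap_apply_of_ne_of_ne, had.symm, hbd.symm, hac.symm, hbc.symm,
        Equiv.swap_apply_of_ne_of_ne hxa hxb]
    · simp [Equiv.swap_apply_of_ne_of_ne, hxa, hxb, hxc, hxd]
  calc (Equiv.swap a b * Equiv.swap c d) ^ 2
      = Equiv.swap a b * (Equiv.swap c d * Equiv.swap a b) * Equiv.swap c d := by
        rw [pow_two]; group
    _ = Equiv.swap a b * (Equiv.swap a b * Equiv.swap c d) * Equiv.swap c d := by rw [← hcomm]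
    _ = (Equiv.swap a b * Equiv.swap a b) * (Equiv.swap c d * Equiv.swap c d) := by group
    _ = 1 := by rw [Equiv.swap_mul_self, Equiv.swap_mul_self, mul_one]

lemma pow_swap_eq_one {G : Type*} [Group G] {x y : G} {k : ℕ} (h : (x * y) ^ k = 1) :
    (y * x) ^ k = 1 := by
  have h1 : y * x = y * (x * y) * y⁻¹ := by group
  rw [h1, conj_pow, h, mul_one, mul_inv_cancel]

end SwapLemmas

namespace CoxA
variable {n : ℕ}

/-- Generator images in `Perm (Fin n)`. -/
def fgen (n : ℕ) (i : Fin (n - 1)) : Equiv.Perm (Fin n) :=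
  Equiv.swap ⟨i.val, by have := i.isLt; omega⟩ ⟨i.val + 1, by have := i.isLt; omega⟩

lemma fgen_rels : ∀ r ∈ coxRels n, FreeGroup.lift (fgen n) r = 1 := by
  rintro r ⟨i, j, rfl⟩
  rw [map_pow, map_mul, FreeGroup.lift_apply_of, FreeGroup.lift_apply_of]
  unfold coxM
  split_ifs with h1 h2
  · subst h1
    rw [pow_one, fgen, Equiv.swap_mul_self]
  · -- adjacent
    have hij : i.val + 1 = j.val ∨ j.val + 1 = i.val := by
      have := h2; simp [Nat.dist] at this
      have hne : i.val ≠ j.val := fun hh => h1 (Fin.ext hh)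
      omega
    rcases hij with hij | hij
    · have : fgen n j = Equiv.swap (⟨i.val+1, by have := i.isLt; omega⟩ : Fin n)
          ⟨i.val+2, by have := j.isLt; omega⟩ := by
        unfold fgen; congr 1 <;> exact Fin.mk_eq_mk.mpr (by omega)
      rw [fgen, this]
      exact swap_cube (by simp [Fin.ext_iff]) (by simp [Fin.ext_iff]) (by simp [Fin.ext_iff])
    · have : fgen n i = Equiv.swap (⟨j.val+1, by have := j.isLt; omega⟩ : Fin n)
          ⟨j.val+2, by have := i.isLt; omega⟩ := by
        unfold fgen; congr 1 <;> exact Fin.mk_eq_mk.mpr (by omega)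
      rw [this, fgen]
      refine pow_swap_eq_one (swap_cube ?_ ?_ ?_) <;> simp [Fin.ext_iff]
  · -- distant: all four endpoints distinct
    have hd : ¬ Nat.dist i.val j.val ≤ 1 := by
      simp [Nat.dist] at h2 ⊢
      have hne : i.val ≠ j.val := fun hh => h1 (Fin.ext hh)
      omega
    simp only [Nat.dist] at hd
    unfold fgen
    exact swap_sq_disj (by simp [Fin.ext_iff]; omega) (by simp [Fin.ext_iff]; omega)
      (by simp [Fin.ext_iff]; omega) (by simp [Fin.ext_iff]; omega)

/-- The homomorphism to the symmetric group. -/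
noncomputable def φ (n : ℕ) : G n →* Equiv.Perm (Fin n) :=
  PresentedGroup.toGroup fgen_rels

lemma φ_surjective : Function.Surjective (φ n) := by
  cases n with
  | zero =>
    intro σ
    exact ⟨1, Subsingleton.elim _ _⟩
  | succ n =>
    intro σ
    have hmc := Equiv.Perm.mclosure_swap_castSucc_succ n
    have hset : (Set.range fun i : Fin n => Equiv.swap i.castSucc i.succ) ⊆
        ((φ (n+1)).range.toSubmonoid : Set (Equiv.Perm (Fin (n+1)))) := by
      rintro x ⟨i, rfl⟩
      have hi : Equiv.swap i.castSucc i.succ = fgen (n+1) ⟨i.val, by omega⟩ := by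
        unfold fgen; congr 1 <;> exact Fin.ext (by simp)
      refine ⟨PresentedGroup.of ⟨i.val, by omega⟩, ?_⟩
      show φ (n+1) (PresentedGroup.of ⟨i.val, by omega⟩) = _
      rw [φ, PresentedGroup.toGroup.of]
      exact hi.symm
    have : σ ∈ Submonoid.closure (Set.range fun i : Fin n => Equiv.swap i.castSucc i.succ) := by
      rw [hmc]; trivial
    have hσ : σ ∈ (φ (n+1)).range.toSubmonoid := Submonoid.closure_le.mpr hset this
    exact hσ

end CoxA

/-- A group with presentation
`⟨r₁,…,r_{n−1} ∣ (rᵢrⱼ)^{mᵢⱼ}⟩`, where `mᵢᵢ = 1`, `mᵢⱼ = 3` for `|i−j| = 1`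
and `mᵢⱼ = 2` for `|i−j| > 1`, is isomorphic to the symmetric group `Sym(n)`. -/
theorem presentedGroup_iso_symmetricGroup (n : ℕ) :
    Nonempty (PresentedGroup (coxRels n) ≃* Equiv.Perm (Fin n)) := by
  obtain ⟨hfin, hcard⟩ := CoxA.finite_and_card (n := n)
  have hsurj := CoxA.φ_surjective (n := n)
  have hcardPerm : Nat.card (Equiv.Perm (Fin n)) = n.factorial := by
    rw [Nat.card_eq_fintype_card, Fintype.card_perm, Fintype.card_fin]
  have hle : Nat.card (Equiv.Perm (Fin n)) ≤ Nat.card (CoxA.G n) :=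
    Nat.card_le_card_of_surjective _ hsurj
  have heq : Nat.card (CoxA.G n) = Nat.card (Equiv.Perm (Fin n)) :=
    le_antisymm (hcardPerm ▸ hcard) hle
  have hbij : Function.Bijective (CoxA.φ n) :=
    (Nat.bijective_iff_surjective_and_card _).mpr ⟨hsurj, heq⟩
  exact ⟨MulEquiv.ofBijective _ hbij⟩
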